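/- arXiv:2307.04050 — 2 statements merged into one kernel-verified Lean document; each statement's English description precedes it below -/
import Mathlib

section
/- The unit-volume load planning problem with binary trailer decisions is equivalent to set cover: given ground set U = K of commodities and, for each sort pair s ∈ S, the subset K_s = {k ∈ K : s ∈ S^k}, the minimum number of sort pairs y with Σ_s y_s trailers needed to feasibly containerize all commodities (with Q = max_s |K_s|, unit volumes, unit costs) equals the minimum number of subsets K_s whose union is K, provided every commodity has at least one compatible sort pair. -/
/-- the unit-volume load planning problem with binary trailer
decisions is equivalent to set cover: the minimum number of trailers
`Σ_s y_s` over feasible plans equals the minimum cardinality of a family of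
sort pairs whose compatibility sets cover all commodities. -/
theorem stmt3
    {S K : Type*} [Fintype S] [Fintype K] [DecidableEq S] [DecidableEq K]
    (Sk : K → Finset S) (hSk : ∀ k, (Sk k).Nonempty)
    (Q : ℕ)
    (hQ : Q = Finset.univ.sup fun s : S => (Finset.univ.filter fun k => s ∈ Sk k).card) :
    sInf {n : ℕ | ∃ (x : K → S → ℝ) (y : S → ℕ),
        (∀ k s, 0 ≤ x k s) ∧
        (∀ k s, s ∉ Sk k → x k s = 0) ∧
        (∀ k, (∑ s ∈ Sk k, x k s) = 1) ∧
        (∀ s, y s ≤ 1) ∧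
        (∀ s, (∑ k ∈ Finset.univ.filter fun k => s ∈ Sk k, x k s) ≤ (Q : ℝ) * (y s : ℝ)) ∧
        n = ∑ s, y s}
      =
    sInf {n : ℕ | ∃ T : Finset S, (∀ k, ∃ s ∈ T, s ∈ Sk k) ∧ n = T.card} := by
  set A := {n : ℕ | ∃ (x : K → S → ℝ) (y : S → ℕ),
        (∀ k s, 0 ≤ x k s) ∧
        (∀ k s, s ∉ Sk k → x k s = 0) ∧
        (∀ k, (∑ s ∈ Sk k, x k s) = 1) ∧
        (∀ s, y s ≤ 1) ∧
        (∀ s, (∑ k ∈ Finset.univ.filter fun k => s ∈ Sk k, x k s) ≤ (Q : ℝ) * (y s : ℝ)) ∧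
        n = ∑ s, y s} with hA
  set B := {n : ℕ | ∃ T : Finset S, (∀ k, ∃ s ∈ T, s ∈ Sk k) ∧ n = T.card} with hB
  -- from a plan, build a cover with card ≤ n
  have dir1 : ∀ n ∈ A, ∃ m ∈ B, m ≤ n := by
    rintro n ⟨x, y, hx0, _, hxsum, hy1, hcap, rfl⟩
    refine ⟨(Finset.univ.filter fun s => y s ≠ 0).card, ⟨_, ?_, rfl⟩, ?_⟩
    · intro k
      have h1 : (∑ s ∈ Sk k, x k s) ≠ 0 := by rw [hxsum k]; norm_num
      obtain ⟨s, hs, hne⟩ := Finset.exists_ne_zero_of_sum_ne_zero h1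
      refine ⟨s, Finset.mem_filter.mpr ⟨Finset.mem_univ s, ?_⟩, hs⟩
      intro hy0
      have hpos : 0 < x k s := lt_of_le_of_ne (hx0 k s) (Ne.symm hne)
      have hle : x k s ≤ ∑ k' ∈ Finset.univ.filter fun k' => s ∈ Sk k', x k' s :=
        Finset.single_le_sum (fun i _ => hx0 i s)
          (Finset.mem_filter.mpr ⟨Finset.mem_univ k, hs⟩)
      have := (hle.trans (hcap s))
      rw [hy0] at this
      simp at this
      linarith
    · calc (Finset.univ.filter fun s => y s ≠ 0).card
          = ∑ s ∈ Finset.univ.filter fun s => y s ≠ 0, 1 := by simp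
        _ ≤ ∑ s ∈ Finset.univ.filter fun s => y s ≠ 0, y s :=
            Finset.sum_le_sum (fun s hs => Nat.one_le_iff_ne_zero.mpr (Finset.mem_filter.mp hs).2)
        _ ≤ ∑ s, y s := Finset.sum_le_sum_of_subset (Finset.filter_subset _ _)
  -- from a cover, build a plan with equal value
  have dir2 : ∀ n ∈ B, ∃ m ∈ A, m ≤ n := by
    rintro n ⟨T, hT, rfl⟩
    choose f hfT hfSk using hT
    refine ⟨T.card, ⟨fun k s => if s = f k then 1 else 0, fun s => if s ∈ T then 1 else 0,
      ?_, ?_, ?_, ?_, ?_, ?_⟩, le_rfl⟩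
    · intro k s; dsimp only; split <;> norm_num
    · intro k s hs
      simp only [ite_eq_right_iff]
      rintro rfl; exact absurd (hfSk k) hs
    · intro k
      rw [Finset.sum_ite_eq' (Sk k) (f k) (fun _ => (1 : ℝ))]
      simp [hfSk k]
    · intro s; dsimp only; split <;> simp
    · intro s
      by_cases hsT : s ∈ T
      · have hcard : ((Finset.univ.filter fun k => s ∈ Sk k).card : ℝ) ≤ (Q : ℝ) := by
          exact_mod_cast hQ ▸ Finset.le_sup (Finset.mem_univ s)
        calc (∑ k ∈ Finset.univ.filter fun k => s ∈ Sk k, if s = f k then (1:ℝ) else 0)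
            ≤ ∑ k ∈ Finset.univ.filter fun k => s ∈ Sk k, 1 :=
              Finset.sum_le_sum (fun i _ => by split <;> norm_num)
          _ = ((Finset.univ.filter fun k => s ∈ Sk k).card : ℝ) := by simp
          _ ≤ (Q : ℝ) * 1 := by rw [mul_one]; exact hcard
          _ = (Q : ℝ) * (((if s ∈ T then 1 else 0 : ℕ)) : ℝ) := by simp [hsT]
      · have : ∀ k ∈ Finset.univ.filter fun k => s ∈ Sk k, (if s = f k then (1:ℝ) else 0) = 0 := by
          intro k _
          split
          · next h => exact absurd (h ▸ hfT k) hsT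
          · rfl
        rw [Finset.sum_congr rfl this]
        simp [hsT]
    · simp [Finset.sum_ite_mem, Finset.univ_inter]
  -- both nonempty
  have hBne : B.Nonempty := by
    refine ⟨(Finset.univ : Finset S).card, Finset.univ, fun k => ?_, rfl⟩
    obtain ⟨s, hs⟩ := hSk k
    exact ⟨s, Finset.mem_univ s, hs⟩
  have hAne : A.Nonempty := by
    obtain ⟨n, hn⟩ := hBne
    obtain ⟨m, hm, _⟩ := dir2 n hn
    exact ⟨m, hm⟩
  apply le_antisymm
  · obtain ⟨m, hm, hle⟩ := dir2 _ (Nat.sInf_mem hBne)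
    exact le_trans (Nat.sInf_le hm) hle
  · obtain ⟨m, hm, hle⟩ := dir1 _ (Nat.sInf_mem hAne)
    exact le_trans (Nat.sInf_le hm) hle
end

section
/- If each commodity k is compatible with exactly one sort pair s_k, the load planning problem decomposes: its optimal value equals the sum over sort pairs s of the optimal values of independent minimum-knapsack problems, each minimizing Σ_{v ∈ V_s} c_v y_{s,v} over nonnegative integers subject to Σ_{v ∈ V_s} Q_v y_{s,v} ≥ Σ_{k : s_k = s} q^k. -/
/-- if each commodity `k` is compatible with exactly one sort pair
`sk k`, the load planning problem decomposes: its optimal value equals the sum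
over sort pairs `s` of the optimal values of independent minimum-knapsack
problems with demand `Σ_{k : sk k = s} q k` and trailer types `V_s`. -/
theorem stmt12
    {S K V : Type*} [Fintype S] [Fintype K] [Fintype V] [DecidableEq S] [DecidableEq V]
    (sk : K → S) (Vs : S → Finset V)
    (Qv cv : V → ℝ) (hQv : ∀ v, 0 < Qv v) (hcv : ∀ v, 0 < cv v)
    (q : K → ℝ) (hq : ∀ k, 0 ≤ q k)
    (hVs : ∀ s, (0 < ∑ k ∈ Finset.univ.filter fun k => sk k = s, q k) → (Vs s).Nonempty) :
    sInf {cost : ℝ | ∃ (x : K → V → ℝ) (y : S → V → ℕ),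
        (∀ k v, 0 ≤ x k v) ∧
        (∀ k v, v ∉ Vs (sk k) → x k v = 0) ∧
        (∀ k, (∑ v ∈ Vs (sk k), x k v) = q k) ∧
        (∀ s, ∀ v ∈ Vs s,
          (∑ k ∈ Finset.univ.filter fun k => sk k = s, x k v) ≤ Qv v * (y s v : ℝ)) ∧
        cost = ∑ s, ∑ v ∈ Vs s, cv v * (y s v : ℝ)}
      =
    ∑ s, sInf {cost : ℝ | ∃ y : V → ℕ,
        (∑ k ∈ Finset.univ.filter fun k => sk k = s, q k)
          ≤ (∑ v ∈ Vs s, Qv v * (y v : ℝ)) ∧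
        cost = ∑ v ∈ Vs s, cv v * (y v : ℝ)} := by
  classical
  set D : S → ℝ := fun s => ∑ k ∈ Finset.univ.filter fun k => sk k = s, q k with hDdef
  have hD0 : ∀ s, 0 ≤ D s := fun s => Finset.sum_nonneg fun k _ => hq k
  set A : Set ℝ := {cost : ℝ | ∃ (x : K → V → ℝ) (y : S → V → ℕ),
        (∀ k v, 0 ≤ x k v) ∧
        (∀ k v, v ∉ Vs (sk k) → x k v = 0) ∧
        (∀ k, (∑ v ∈ Vs (sk k), x k v) = q k) ∧
        (∀ s, ∀ v ∈ Vs s,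
          (∑ k ∈ Finset.univ.filter fun k => sk k = s, x k v) ≤ Qv v * (y s v : ℝ)) ∧
        cost = ∑ s, ∑ v ∈ Vs s, cv v * (y s v : ℝ)} with hAdef
  set B : S → Set ℝ := fun s => {cost : ℝ | ∃ y : V → ℕ,
        D s ≤ (∑ v ∈ Vs s, Qv v * (y v : ℝ)) ∧
        cost = ∑ v ∈ Vs s, cv v * (y v : ℝ)} with hBdef
  show sInf A = ∑ s, sInf (B s)
  -- B s nonempty
  have hBne : ∀ s, (B s).Nonempty := by
    intro s
    by_cases hpos : 0 < D s
    · obtain ⟨v0, hv0⟩ := hVs s hpos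
      obtain ⟨n, hn⟩ := exists_nat_ge (D s / Qv v0)
      refine ⟨∑ v ∈ Vs s, cv v * (((fun v => if v = v0 then n else 0) v : ℕ) : ℝ),
        fun v => if v = v0 then n else 0, ?_, rfl⟩
      have : (∑ v ∈ Vs s, Qv v * (((if v = v0 then n else 0) : ℕ) : ℝ))
          = Qv v0 * n := by
        rw [Finset.sum_eq_single v0]
        · simp
        · intro b _ hb; simp [hb]
        · intro h; exact absurd hv0 h
      rw [this]
      rw [div_le_iff₀ (hQv v0)] at hn
      linarith [hn]
    · refine ⟨0, fun _ => 0, ?_, by simp⟩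
      simp
      exact le_of_not_gt hpos
  -- elements of B s are nonneg
  have hBnn : ∀ s, ∀ b ∈ B s, (0:ℝ) ≤ b := by
    rintro s b ⟨y, -, rfl⟩
    exact Finset.sum_nonneg fun v _ => mul_nonneg (hcv v).le (Nat.cast_nonneg _)
  have hBbdd : ∀ s, BddBelow (B s) := fun s => ⟨0, fun b hb => hBnn s b hb⟩
  -- combine: choices from each B s give an element of A
  have combine : ∀ z : S → ℝ, (∀ s, z s ∈ B s) → (∑ s, z s) ∈ A := by
    intro z hz
    choose y hcap hcost using hz
    set C : S → ℝ := fun s => ∑ v ∈ Vs s, Qv v * ((y s v : ℕ) : ℝ) with hCdef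
    have hC0 : ∀ s, 0 ≤ C s :=
      fun s => Finset.sum_nonneg fun v _ => mul_nonneg (hQv v).le (Nat.cast_nonneg _)
    refine ⟨fun k v => if v ∈ Vs (sk k) ∧ 0 < D (sk k)
        then q k * (Qv v * (y (sk k) v : ℝ)) / C (sk k) else 0, y, ?_, ?_, ?_, ?_, ?_⟩
    · intro k v
      dsimp only
      split
      · exact div_nonneg (mul_nonneg (hq k) (mul_nonneg (hQv v).le (Nat.cast_nonneg _)))
          (hC0 _)
      · exact le_refl 0
    · intro k v hv
      dsimp only
      rw [if_neg]; rintro ⟨h1, -⟩; exact hv h1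
    · intro k
      by_cases hpos : 0 < D (sk k)
      · have hCpos : 0 < C (sk k) := lt_of_lt_of_le hpos (hcap _)
        have : ∀ v ∈ Vs (sk k),
            (if v ∈ Vs (sk k) ∧ 0 < D (sk k)
              then q k * (Qv v * (y (sk k) v : ℝ)) / C (sk k) else 0)
            = q k / C (sk k) * (Qv v * (y (sk k) v : ℝ)) := by
          intro v hv; rw [if_pos ⟨hv, hpos⟩]; ring
        rw [Finset.sum_congr rfl this, ← Finset.mul_sum]
        show q k / C (sk k) * C (sk k) = q k
        field_simp
      · have hqk : q k = 0 := by
          have hDz : D (sk k) = 0 := le_antisymm (le_of_not_gt hpos) (hD0 _)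
          have := (Finset.sum_eq_zero_iff_of_nonneg
            (fun j (_ : j ∈ Finset.univ.filter fun j => sk j = sk k) => hq j)).1 hDz
          exact this k (by simp)
        rw [Finset.sum_eq_zero, hqk]
        intro v hv
        dsimp only
        rw [if_neg]; rintro ⟨-, h2⟩; exact hpos h2
    · intro s v hv
      by_cases hpos : 0 < D s
      · have hCpos : 0 < C s := lt_of_lt_of_le hpos (hcap _)
        have hterm : ∀ k ∈ Finset.univ.filter fun k => sk k = s,
            (if v ∈ Vs (sk k) ∧ 0 < D (sk k)
              then q k * (Qv v * (y (sk k) v : ℝ)) / C (sk k) else 0)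
            = q k * ((Qv v * (y s v : ℝ)) / C s) := by
          intro k hk
          have hks : sk k = s := by simpa using hk
          rw [hks, if_pos ⟨hv, hpos⟩]; ring
        rw [Finset.sum_congr rfl hterm, ← Finset.sum_mul]
        show D s * (Qv v * (y s v : ℝ) / C s) ≤ Qv v * (y s v : ℝ)
        calc D s * (Qv v * (y s v : ℝ) / C s)
              = Qv v * (y s v : ℝ) / C s * D s := by ring
          _ ≤ Qv v * (y s v : ℝ) / C s * C s := by
              apply mul_le_mul_of_nonneg_left (hcap s)
              exact div_nonneg (mul_nonneg (hQv v).le (Nat.cast_nonneg _)) (hC0 s)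
          _ = Qv v * (y s v : ℝ) := by field_simp
      · rw [Finset.sum_eq_zero]
        · exact mul_nonneg (hQv v).le (Nat.cast_nonneg _)
        · intro k hk
          have hks : sk k = s := by simpa using hk
          dsimp only
          rw [if_neg]; rintro ⟨-, h2⟩; rw [hks] at h2; exact hpos h2
    · exact Finset.sum_congr rfl fun s _ => hcost s
  -- A nonempty
  have hAne : A.Nonempty := by
    choose z hz using hBne
    exact ⟨∑ s, z s, combine z hz⟩
  -- lower bound: every a ∈ A is ≥ ∑ sInf (B s)
  have hlow : ∀ a ∈ A, (∑ s, sInf (B s)) ≤ a := by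
    rintro a ⟨x, y, hxnn, hxsupp, hxdem, hxcap, rfl⟩
    refine Finset.sum_le_sum fun s _ => ?_
    refine csInf_le (hBbdd s) ⟨y s, ?_, rfl⟩
    calc D s = ∑ k ∈ Finset.univ.filter fun k => sk k = s, ∑ v ∈ Vs s, x k v := by
          refine Finset.sum_congr rfl fun k hk => ?_
          have hks : sk k = s := by simpa using hk
          rw [← hxdem k, hks]
      _ = ∑ v ∈ Vs s, ∑ k ∈ Finset.univ.filter fun k => sk k = s, x k v :=
          Finset.sum_comm
      _ ≤ ∑ v ∈ Vs s, Qv v * (y s v : ℝ) :=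
          Finset.sum_le_sum fun v hv => hxcap s v hv
  have hge : (∑ s, sInf (B s)) ≤ sInf A := le_csInf hAne hlow
  have hle : sInf A ≤ ∑ s, sInf (B s) := by
    rcases isEmpty_or_nonempty S with hS | hS
    · rw [Finset.univ_eq_empty, Finset.sum_empty]
      have : (0:ℝ) ∈ A := by
        have := combine (fun _ => 0) (fun s => (hS.elim s))
        simpa using this
      exact csInf_le ⟨∑ s, sInf (B s), hlow⟩ this
    · refine le_of_forall_pos_le_add fun ε hε => ?_
      have hcard : (0:ℝ) < Fintype.card S := by
        exact_mod_cast Fintype.card_pos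
      have hε' : 0 < ε / Fintype.card S := div_pos hε hcard
      have hpick : ∀ s, ∃ b ∈ B s, b < sInf (B s) + ε / Fintype.card S :=
        fun s => Real.lt_sInf_add_pos (hBne s) hε'
      choose b hbmem hblt using hpick
      calc sInf A ≤ ∑ s, b s :=
            csInf_le ⟨∑ s, sInf (B s), hlow⟩ (combine b hbmem)
        _ ≤ ∑ s : S, (sInf (B s) + ε / Fintype.card S) :=
            Finset.sum_le_sum fun s _ => (hblt s).le
        _ = (∑ s, sInf (B s)) + ε := by
            rw [Finset.sum_add_distrib, Finset.sum_const, Finset.card_univ,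
              nsmul_eq_mul]
            congr 1
            field_simp
  linarith
end
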